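/- Define eff : (0,1) → ℝ by eff(a) = a · (Φ^{−1}(1 − a/2))^{1/2}, where Φ^{−1} is the inverse of the standard normal cumulative distribution function (note Φ^{−1}(1 − a/2) > 0 for a ∈ (0,1)). Then eff attains a maximum on (0,1), and every maximizer a* satisfies 0.6505 < a* < 0.6515; i.e., the asymptotically optimal HMC acceptance probability, rounded to three decimal places, equals 0.651. -/

import Mathlib

open MeasureTheory

/-- The standard normal cumulative distribution function. -/
noncomputable def stdNormalCDF (t : ℝ) : ℝ :=
  (Real.sqrt (2 * Real.pi))⁻¹ * ∫ u in Set.Iic t, Real.exp (-u ^ 2 / 2)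

/-- The efficiency function `eff(a) = a·(Φ⁻¹(1 - a/2))^{1/2}` of the paper
(formula `eq:auxiliar`, up to the target-dependent constant `√2/Σ^{1/4}`). -/
noncomputable def eff (a : ℝ) : ℝ :=
  a * Real.sqrt (Function.invFun stdNormalCDF (1 - a / 2))

section AuxProof
open Set Real Filter

namespace Aux

noncomputable def f (u : ℝ) : ℝ := Real.exp (-u ^ 2 / 2)

lemma f_eq (u : ℝ) : f u = Real.exp (-(1/2 : ℝ) * u ^ 2) := by
  unfold f; ring_nf

lemma f_pos (u : ℝ) : 0 < f u := Real.exp_pos _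

lemma f_cont : Continuous f := by
  unfold f; continuity

lemma f_int : Integrable f := by
  have h := integrable_exp_neg_mul_sq (by norm_num : (0:ℝ) < 1/2)
  refine h.congr ?_
  · exact Eventually.of_forall fun u => by rw [f_eq]

lemma sqrt2pi_pos : 0 < Real.sqrt (2 * Real.pi) :=
  Real.sqrt_pos.2 (by positivity)

lemma total : ∫ u, f u = Real.sqrt (2 * Real.pi) := by
  have h := integral_gaussian (1/2 : ℝ)
  simp_rw [← f_eq] at h
  rw [h]; rw [show (2:ℝ) * Real.pi = Real.pi/(1/2) by ring]

lemma f_even (u : ℝ) : f (-u) = f u := by unfold f; ring_nf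

lemma Iic_zero : ∫ u in Iic (0:ℝ), f u = Real.sqrt (2 * Real.pi) / 2 := by
  have h1 : (∫ u in Iic (0:ℝ), f u) = ∫ u in Ioi (0:ℝ), f u := by
    have h := integral_comp_neg_Iic (0:ℝ) f
    simp only [f_even, neg_zero] at h
    exact h
  have h2 := intervalIntegral.integral_Iic_add_Ioi (f_int.integrableOn (s := Iic 0))
    (f_int.integrableOn (s := Ioi 0))
  rw [total] at h2
  linarith [h1, h2]

lemma Phi_eq (t : ℝ) :
    stdNormalCDF t = 1/2 + (Real.sqrt (2 * Real.pi))⁻¹ * ∫ u in (0:ℝ)..t, f u := by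
  have h := intervalIntegral.integral_Iic_sub_Iic (f_int.integrableOn (s := Iic 0))
    (f_int.integrableOn (s := Iic t))
  unfold stdNormalCDF
  have hs := sqrt2pi_pos.ne'
  have hI : (∫ u in Iic t, Real.exp (-u ^ 2 / 2)) = Real.sqrt (2 * Real.pi) / 2 + ∫ u in (0:ℝ)..t, f u := by
    have h0 : (∫ u in Iic t, Real.exp (-u ^ 2 / 2)) = ∫ u in Iic t, f u := rfl
    rw [h0, ← Iic_zero]; linarith [h]
  rw [hI, mul_add, ← mul_div_assoc, inv_mul_cancel₀ hs]

lemma one_sub_Phi (t : ℝ) :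
    1 - stdNormalCDF t = (Real.sqrt (2 * Real.pi))⁻¹ * ∫ u in Ioi t, f u := by
  have h2 := intervalIntegral.integral_Iic_add_Ioi (f_int.integrableOn (s := Iic t))
    (f_int.integrableOn (s := Ioi t))
  rw [total] at h2
  unfold stdNormalCDF
  have : (∫ u in Iic t, Real.exp (-u ^ 2 / 2)) = ∫ u in Iic t, f u := rfl
  rw [this]
  have hs := sqrt2pi_pos.ne'
  have hinv : (Real.sqrt (2 * Real.pi))⁻¹ * Real.sqrt (2 * Real.pi) = 1 := inv_mul_cancel₀ hs
  calc 1 - (Real.sqrt (2 * Real.pi))⁻¹ * ∫ u in Iic t, f u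
      = (Real.sqrt (2 * Real.pi))⁻¹ * (Real.sqrt (2 * Real.pi) - ∫ u in Iic t, f u) := by
        rw [mul_sub, hinv]
    _ = (Real.sqrt (2 * Real.pi))⁻¹ * ∫ u in Ioi t, f u := by rw [mul_eq_mul_left_iff]; left; linarith [h2]

end Aux

namespace Aux
open Topology

lemma hasDerivAt_Phi (t : ℝ) :
    HasDerivAt stdNormalCDF ((Real.sqrt (2 * Real.pi))⁻¹ * f t) t := by
  have heq : stdNormalCDF = fun s =>
      1/2 + (Real.sqrt (2 * Real.pi))⁻¹ * ∫ u in (0:ℝ)..s, f u := funext Phi_eq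
  rw [heq]
  have h1 : HasDerivAt (fun s => ∫ u in (0:ℝ)..s, f u) (f t) t :=
    intervalIntegral.integral_hasDerivAt_right
      (f_cont.intervalIntegrable 0 t)
      (f_cont.stronglyMeasurableAtFilter _ _)
      f_cont.continuousAt
  exact (h1.const_mul ((Real.sqrt (2 * Real.pi))⁻¹)).const_add (1/2)

lemma Phi_cont : Continuous stdNormalCDF :=
  continuous_iff_continuousAt.2 fun t => (hasDerivAt_Phi t).continuousAt

lemma Phi_strictMono : StrictMono stdNormalCDF := by
  apply strictMono_of_deriv_pos
  intro x
  rw [(hasDerivAt_Phi x).deriv]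
  exact mul_pos (inv_pos.2 sqrt2pi_pos) (f_pos x)

lemma Phi_zero : stdNormalCDF 0 = 1/2 := by
  rw [Phi_eq]; simp

lemma Phi_lt_one (t : ℝ) : stdNormalCDF t < 1 := by
  have h := one_sub_Phi t
  have hpos : 0 < ∫ u in Ioi t, f u := by
    rw [setIntegral_pos_iff_support_of_nonneg_ae
      (Eventually.of_forall fun u => (f_pos u).le) (f_int.integrableOn)]
    have : Function.support f = univ := by
      ext u; simp [Function.support, (f_pos u).ne']
    rw [this, univ_inter, Real.volume_Ioi]
    exact ENNReal.zero_lt_top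
  nlinarith [mul_pos (inv_pos.2 sqrt2pi_pos) hpos]

lemma Phi_pos (t : ℝ) : 0 < stdNormalCDF t := by
  unfold stdNormalCDF
  refine mul_pos (inv_pos.2 sqrt2pi_pos) ?_
  have h0 : (∫ u in Iic t, Real.exp (-u ^ 2 / 2)) = ∫ u in Iic t, f u := rfl
  rw [h0, setIntegral_pos_iff_support_of_nonneg_ae
    (Eventually.of_forall fun u => (f_pos u).le) (f_int.integrableOn)]
  have : Function.support f = univ := by
    ext u; simp [Function.support, (f_pos u).ne']
  rw [this, univ_inter, Real.volume_Iic]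
  exact ENNReal.zero_lt_top

/-- ∫_{Ioi x} u e^{-u²/2} = e^{-x²/2} -/
lemma integral_mul_f (x : ℝ) : ∫ u in Ioi x, u * f u = f x := by
  have hderiv : ∀ u ∈ Ici x, HasDerivAt (fun v => -f v) (u * f u) u := by
    intro u _
    have h1 : HasDerivAt (fun v : ℝ => -v^2/2) (-u) u := by
      have := ((hasDerivAt_pow 2 u).div_const 2).neg
      convert this using 1
      · rfl
      · rfl
      · funext v; simp only [Pi.neg_apply]; ring
      · norm_num
    have := (h1.exp).neg
    convert this using 1
    · rfl
    · rfl
    · rfl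
    unfold f
    ring
  have hint : IntegrableOn (fun u => u * f u) (Ioi x) := by
    have h := integrable_mul_exp_neg_mul_sq (by norm_num : (0:ℝ) < 1/2)
    refine (h.congr ?_).integrableOn
    exact Eventually.of_forall fun u => by simp [f_eq]
  have htend : Tendsto (fun v => -f v) atTop (𝓝 0) := by
    have hsq : Tendsto (fun v : ℝ => v ^ 2 / 2) atTop atTop :=
      (tendsto_pow_atTop (by norm_num : (2:ℕ) ≠ 0)).atTop_div_const (by norm_num)
    have h2 : Tendsto (fun v : ℝ => Real.exp (-(v ^ 2 / 2))) atTop (𝓝 0) :=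
      Real.tendsto_exp_atBot.comp (tendsto_neg_atTop_atBot.comp hsq)
    have h3 : f = fun v : ℝ => Real.exp (-(v ^ 2 / 2)) := by
      funext v; unfold f; ring_nf
    rw [show (0:ℝ) = -0 by ring, h3]
    exact h2.neg
  have := MeasureTheory.integral_Ioi_of_hasDerivAt_of_tendsto' hderiv hint htend
  rw [this]; ring

/-- Mills-type bound : for x > 0, 1 - Φ(x) ≤ C e^{-x²/2}/x -/
lemma mills (x : ℝ) (hx : 0 < x) :
    1 - stdNormalCDF x ≤ (Real.sqrt (2 * Real.pi))⁻¹ * (f x / x) := by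
  rw [one_sub_Phi]
  refine mul_le_mul_of_nonneg_left ?_ (inv_pos.2 sqrt2pi_pos).le
  have hmono : (∫ u in Ioi x, f u) ≤ ∫ u in Ioi x, (u/x) * f u := by
    apply setIntegral_mono_on (f_int.integrableOn)
    · have h := integrable_mul_exp_neg_mul_sq (by norm_num : (0:ℝ) < 1/2)
      have h2 : Integrable (fun u : ℝ => u * f u) := h.congr
        (Eventually.of_forall fun u => by simp [f_eq])
      exact (h2.div_const x).congr (Eventually.of_forall fun u => by ring) |>.integrableOn
    · exact measurableSet_Ioi
    · intro u hu
      have hux : x ≤ u := (le_of_lt hu)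
      have : 1 ≤ u / x := (one_le_div hx).2 hux
      nlinarith [f_pos u]
  have heq : (∫ u in Ioi x, (u/x) * f u) = f x / x := by
    have h2 : Integrable (fun u : ℝ => u * f u) :=
      (integrable_mul_exp_neg_mul_sq (by norm_num : (0:ℝ) < 1/2)).congr
        (Eventually.of_forall fun u => by simp [f_eq])
    calc (∫ u in Ioi x, (u/x) * f u) = ∫ u in Ioi x, (u * f u) / x := by
          congr 1; funext u; ring
      _ = (∫ u in Ioi x, u * f u) / x := by rw [MeasureTheory.integral_div]
      _ = f x / x := by rw [integral_mul_f]
  linarith [hmono, heq.le, heq.ge]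

lemma Phi_tendsto_atTop : Tendsto stdNormalCDF atTop (𝓝 1) := by
  have hub : ∀ x : ℝ, stdNormalCDF x ≤ 1 := fun x => (Phi_lt_one x).le
  have hlb : ∀ x : ℝ, 1 ≤ x → 1 - (Real.sqrt (2 * Real.pi))⁻¹ / x ≤ stdNormalCDF x := by
    intro x hx
    have h := mills x (by linarith)
    have hf1 : f x ≤ 1 := by
      unfold f
      rw [Real.exp_le_one_iff]
      nlinarith
    have hC : (0:ℝ) < (Real.sqrt (2 * Real.pi))⁻¹ := inv_pos.2 sqrt2pi_pos
    have : (Real.sqrt (2 * Real.pi))⁻¹ * (f x / x) ≤ (Real.sqrt (2 * Real.pi))⁻¹ / x := by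
      rw [div_eq_mul_inv ((Real.sqrt (2 * Real.pi))⁻¹)]
      rw [div_eq_mul_inv]
      have hxinv : (0:ℝ) ≤ x⁻¹ := by positivity
      have hfx : f x * x⁻¹ ≤ x⁻¹ := by nlinarith [f_pos x]
      nlinarith
    linarith
  have h1 : Tendsto (fun x : ℝ => 1 - (Real.sqrt (2 * Real.pi))⁻¹ / x) atTop (𝓝 1) := by
    have := tendsto_const_div_atTop_nhds_zero_nat (1:ℝ)
    have h2 : Tendsto (fun x : ℝ => (Real.sqrt (2 * Real.pi))⁻¹ / x) atTop (𝓝 0) :=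
      tendsto_const_nhds.div_atTop tendsto_id
    simpa using (tendsto_const_nhds (x := (1:ℝ)) (f := atTop)).sub h2
  refine tendsto_of_tendsto_of_tendsto_of_le_of_le' h1 tendsto_const_nhds ?_ ?_
  · filter_upwards [eventually_ge_atTop (1:ℝ)] with x hx using hlb x hx
  · filter_upwards with x using hub x

lemma exists_pos_Phi_eq (y : ℝ) (hy1 : 1/2 < y) (hy2 : y < 1) :
    ∃ x > 0, stdNormalCDF x = y := by
  have : ∀ᶠ x in atTop, y < stdNormalCDF x :=
    Phi_tendsto_atTop.eventually (eventually_gt_nhds hy2)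
  obtain ⟨b, hb⟩ := this.exists
  have hb0 : stdNormalCDF 0 ≤ y := by rw [Phi_zero]; linarith
  have hmem : y ∈ Icc (stdNormalCDF 0) (stdNormalCDF b) := ⟨hb0, hb.le⟩
  have h0b : (0:ℝ) ≤ b := by
    by_contra h
    push_neg at h
    have h2 := Phi_strictMono h
    rw [Phi_zero] at h2
    linarith
  obtain ⟨x, hx, hxy⟩ := intermediate_value_Icc h0b (Phi_cont.continuousOn) hmem
  refine ⟨x, ?_, hxy⟩
  rcases eq_or_lt_of_le hx.1 with h | h
  · exfalso; rw [← h, Phi_zero] at hxy; linarith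
  · exact h

end Aux

namespace Aux

lemma exp_poly_bound (t : ℝ) (h0 : 0 ≤ t) (h1 : t ≤ 1) :
    |Real.exp (-t) - (1 - t + t^2/2 - t^3/6 + t^4/24)| ≤ t^5/100 := by
  have habs : |(-t)| ≤ 1 := by rw [abs_neg, abs_of_nonneg h0]; exact h1
  have h := Real.exp_bound habs (n := 5) (by norm_num)
  have hsum : (∑ m ∈ Finset.range 5, (-t)^m / (Nat.factorial m : ℝ))
      = 1 - t + t^2/2 - t^3/6 + t^4/24 := by
    simp [Finset.sum_range_succ, Nat.factorial]
    ring
  rw [hsum, abs_neg, abs_of_nonneg h0] at h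
  have : t^5 * ((Nat.succ 5 : ℝ) / ((Nat.factorial 5 : ℝ) * 5)) = t^5/100 := by
    norm_num [Nat.factorial]
    ring
  linarith [h, this.le, this.ge]

lemma exp_neg_le (t : ℝ) (h0 : 0 ≤ t) (h1 : t ≤ 1) :
    Real.exp (-t) ≤ 1 - t + t^2/2 - t^3/6 + t^4/24 + t^5/100 := by
  have := abs_le.1 (exp_poly_bound t h0 h1)
  linarith [this.2]

lemma le_exp_neg (t : ℝ) (h0 : 0 ≤ t) (h1 : t ≤ 1) :
    1 - t + t^2/2 - t^3/6 + t^4/24 - t^5/100 ≤ Real.exp (-t) := by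
  have := abs_le.1 (exp_poly_bound t h0 h1)
  linarith [this.1]

lemma f_le_poly (u : ℝ) (h1 : u^2 ≤ 2) :
    f u ≤ 1 - u^2/2 + u^4/8 - u^6/48 + u^8/384 + u^10/3200 := by
  have hf : f u = Real.exp (-(u^2/2)) := by unfold f; ring_nf
  have h := exp_neg_le (u^2/2) (by positivity) (by linarith)
  have hkey : 1 - u^2/2 + (u^2/2)^2/2 - (u^2/2)^3/6 + (u^2/2)^4/24 + (u^2/2)^5/100
      = 1 - u^2/2 + u^4/8 - u^6/48 + u^8/384 + u^10/3200 := by ring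
  rw [hf]
  linarith [h, hkey.le, hkey.ge]

lemma poly_le_f (u : ℝ) (h1 : u^2 ≤ 2) :
    1 - u^2/2 + u^4/8 - u^6/48 + u^8/384 - u^10/3200 ≤ f u := by
  have hf : f u = Real.exp (-(u^2/2)) := by unfold f; ring_nf
  have h := le_exp_neg (u^2/2) (by positivity) (by linarith)
  have hkey : 1 - u^2/2 + (u^2/2)^2/2 - (u^2/2)^3/6 + (u^2/2)^4/24 - (u^2/2)^5/100
      = 1 - u^2/2 + u^4/8 - u^6/48 + u^8/384 - u^10/3200 := by ring
  rw [hf]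
  linarith [h, hkey.le, hkey.ge]

lemma integral_poly_upper (x : ℝ) :
    (∫ u in (0:ℝ)..x, (1 - u^2/2 + u^4/8 - u^6/48 + u^8/384 + u^10/3200))
      = x - x^3/6 + x^5/40 - x^7/336 + x^9/3456 + x^11/35200 := by
  have hD : ∀ u ∈ Set.uIcc (0:ℝ) x,
      HasDerivAt (fun v => v - v^3/6 + v^5/40 - v^7/336 + v^9/3456 + v^11/35200)
        (1 - u^2/2 + u^4/8 - u^6/48 + u^8/384 + u^10/3200) u := by
    intro u _
    have h := (((((hasDerivAt_id u).sub ((hasDerivAt_pow 3 u).div_const 6)).add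
      ((hasDerivAt_pow 5 u).div_const 40)).sub ((hasDerivAt_pow 7 u).div_const 336)).add
      ((hasDerivAt_pow 9 u).div_const 3456)).add ((hasDerivAt_pow 11 u).div_const 35200)
    convert h using 1
    · rfl
    · rfl
    · rfl
    push_cast
    ring
  have hInt : IntervalIntegrable
      (fun u : ℝ => 1 - u^2/2 + u^4/8 - u^6/48 + u^8/384 + u^10/3200) volume 0 x :=
    (by continuity : Continuous fun u : ℝ => 1 - u^2/2 + u^4/8 - u^6/48 + u^8/384 + u^10/3200).intervalIntegrable 0 x
  rw [intervalIntegral.integral_eq_sub_of_hasDerivAt hD hInt]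
  norm_num

lemma integral_poly_lower (x : ℝ) :
    (∫ u in (0:ℝ)..x, (1 - u^2/2 + u^4/8 - u^6/48 + u^8/384 - u^10/3200))
      = x - x^3/6 + x^5/40 - x^7/336 + x^9/3456 - x^11/35200 := by
  have hD : ∀ u ∈ Set.uIcc (0:ℝ) x,
      HasDerivAt (fun v => v - v^3/6 + v^5/40 - v^7/336 + v^9/3456 - v^11/35200)
        (1 - u^2/2 + u^4/8 - u^6/48 + u^8/384 - u^10/3200) u := by
    intro u _
    have h := (((((hasDerivAt_id u).sub ((hasDerivAt_pow 3 u).div_const 6)).add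
      ((hasDerivAt_pow 5 u).div_const 40)).sub ((hasDerivAt_pow 7 u).div_const 336)).add
      ((hasDerivAt_pow 9 u).div_const 3456)).sub ((hasDerivAt_pow 11 u).div_const 35200)
    convert h using 1
    · rfl
    · rfl
    · rfl
    push_cast
    ring
  have hInt : IntervalIntegrable
      (fun u : ℝ => 1 - u^2/2 + u^4/8 - u^6/48 + u^8/384 - u^10/3200) volume 0 x :=
    (by continuity : Continuous fun u : ℝ => 1 - u^2/2 + u^4/8 - u^6/48 + u^8/384 - u^10/3200).intervalIntegrable 0 x
  rw [intervalIntegral.integral_eq_sub_of_hasDerivAt hD hInt]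
  norm_num

lemma I_le (x : ℝ) (h0 : 0 ≤ x) (h1 : x ≤ 1) :
    (∫ u in (0:ℝ)..x, f u) ≤ x - x^3/6 + x^5/40 - x^7/336 + x^9/3456 + x^11/35200 := by
  rw [← integral_poly_upper x]
  apply intervalIntegral.integral_mono_on h0 (f_cont.intervalIntegrable 0 x)
    ((by continuity : Continuous fun u : ℝ => 1 - u^2/2 + u^4/8 - u^6/48 + u^8/384 + u^10/3200).intervalIntegrable 0 x)
  intro u hu
  apply f_le_poly
  nlinarith [hu.1, hu.2]

lemma le_I (x : ℝ) (h0 : 0 ≤ x) (h1 : x ≤ 1) :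
    x - x^3/6 + x^5/40 - x^7/336 + x^9/3456 - x^11/35200 ≤ ∫ u in (0:ℝ)..x, f u := by
  rw [← integral_poly_lower x]
  apply intervalIntegral.integral_mono_on h0
    ((by continuity : Continuous fun u : ℝ => 1 - u^2/2 + u^4/8 - u^6/48 + u^8/384 - u^10/3200).intervalIntegrable 0 x)
    (f_cont.intervalIntegrable 0 x)
  intro u hu
  apply poly_le_f
  nlinarith [hu.1, hu.2]

lemma sqrt2pi_lb : (2.506628 : ℝ) < Real.sqrt (2 * Real.pi) := by
  rw [show (2.506628:ℝ) = Real.sqrt (2.506628^2) by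
    rw [Real.sqrt_sq (by norm_num)]]
  apply Real.sqrt_lt_sqrt (by positivity)
  nlinarith [Real.pi_gt_d6]

lemma sqrt2pi_ub : Real.sqrt (2 * Real.pi) < (2.5066285 : ℝ) := by
  rw [show (2.5066285:ℝ) = Real.sqrt (2.5066285^2) by
    rw [Real.sqrt_sq (by norm_num)]]
  apply Real.sqrt_lt_sqrt (by positivity)
  nlinarith [Real.pi_lt_d6]

end Aux

namespace Aux

noncomputable def g (x : ℝ) : ℝ := 2 * (1 - stdNormalCDF x) * Real.sqrt x

noncomputable def hh (x : ℝ) : ℝ :=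
  (1 - stdNormalCDF x) - 2 * (Real.sqrt (2 * Real.pi))⁻¹ * x * f x

lemma hasDerivAt_f (x : ℝ) : HasDerivAt f (-x * f x) x := by
  have h1 : HasDerivAt (fun v : ℝ => -v^2/2) (-x) x := by
    have := ((hasDerivAt_pow 2 x).div_const 2).neg
    convert this using 1
    · rfl
    · rfl
    · funext v; simp only [Pi.neg_apply]; ring
    · norm_num
  have := h1.exp
  convert this using 1
  unfold f
  ring
  unfold f
  ring

lemma hasDerivAt_hh (x : ℝ) :
    HasDerivAt hh ((Real.sqrt (2 * Real.pi))⁻¹ * f x * (2*x^2 - 3)) x := by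
  have h1 : HasDerivAt (fun v => 1 - stdNormalCDF v)
      (-((Real.sqrt (2 * Real.pi))⁻¹ * f x)) x := (hasDerivAt_Phi x).const_sub 1
  have h2 : HasDerivAt (fun v : ℝ => v * f v) (1 * f x + x * (-x * f x)) x :=
    (hasDerivAt_id x).mul (hasDerivAt_f x)
  have h3 := h1.sub (h2.const_mul (2 * (Real.sqrt (2 * Real.pi))⁻¹))
  convert h3 using 1
  · rfl
  · rfl
  · funext v; unfold hh; simp only [Pi.sub_apply]; ring
  · ring

lemma hh_cont : Continuous hh := by
  have : Differentiable ℝ hh := fun x => (hasDerivAt_hh x).differentiableAt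
  exact this.continuous

lemma hh_anti : StrictAntiOn hh (Set.Icc 0 1) := by
  apply strictAntiOn_of_deriv_neg (convex_Icc 0 1) hh_cont.continuousOn
  intro x hx
  rw [interior_Icc] at hx
  rw [(hasDerivAt_hh x).deriv]
  have h1 : (0:ℝ) < (Real.sqrt (2 * Real.pi))⁻¹ := inv_pos.2 sqrt2pi_pos
  have hP : 0 < (Real.sqrt (2 * Real.pi))⁻¹ * f x := mul_pos h1 (f_pos x)
  have hq : 2 * x^2 - 3 < 0 := by nlinarith [hx.1, hx.2]
  exact mul_neg_of_pos_of_neg hP hq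

lemma C_lt : (Real.sqrt (2 * Real.pi))⁻¹ < (2.506628:ℝ)⁻¹ :=
  inv_strictAnti₀ (by norm_num) sqrt2pi_lb

lemma lt_C : (2.5066285:ℝ)⁻¹ < (Real.sqrt (2 * Real.pi))⁻¹ :=
  inv_strictAnti₀ sqrt2pi_pos sqrt2pi_ub

lemma hh_eq (x : ℝ) : hh x = 1/2 - (Real.sqrt (2 * Real.pi))⁻¹ *
    ((∫ u in (0:ℝ)..x, f u) + 2 * x * f x) := by
  unfold hh
  rw [Phi_eq]
  ring

lemma hh_pos_at : 0 < hh 0.45195 := by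
  rw [hh_eq]
  set x : ℝ := 0.45195 with hxdef
  have hI := I_le x (by norm_num) (by norm_num)
  have hE := f_le_poly x (by norm_num)
  have hC := C_lt
  have hCpos : (0:ℝ) < (Real.sqrt (2 * Real.pi))⁻¹ := inv_pos.2 sqrt2pi_pos
  have hS : (∫ u in (0:ℝ)..x, f u) + 2 * x * f x ≤
      (x - x^3/6 + x^5/40 - x^7/336 + x^9/3456 + x^11/35200) +
      2 * x * (1 - x^2/2 + x^4/8 - x^6/48 + x^8/384 + x^10/3200) := by
    have hx0 : (0:ℝ) < 2 * x := by norm_num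
    nlinarith [hI, hE]
  have hSub : (x - x^3/6 + x^5/40 - x^7/336 + x^9/3456 + x^11/35200) +
      2 * x * (1 - x^2/2 + x^4/8 - x^6/48 + x^8/384 + x^10/3200) > 0 := by norm_num
  have h2 : (Real.sqrt (2 * Real.pi))⁻¹ *
      ((∫ u in (0:ℝ)..x, f u) + 2 * x * f x) < (2.506628:ℝ)⁻¹ *
      ((x - x^3/6 + x^5/40 - x^7/336 + x^9/3456 + x^11/35200) +
      2 * x * (1 - x^2/2 + x^4/8 - x^6/48 + x^8/384 + x^10/3200)) := by
    calc (Real.sqrt (2 * Real.pi))⁻¹ * ((∫ u in (0:ℝ)..x, f u) + 2 * x * f x)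
        ≤ (Real.sqrt (2 * Real.pi))⁻¹ *
          ((x - x^3/6 + x^5/40 - x^7/336 + x^9/3456 + x^11/35200) +
          2 * x * (1 - x^2/2 + x^4/8 - x^6/48 + x^8/384 + x^10/3200)) :=
          mul_le_mul_of_nonneg_left hS hCpos.le
      _ < _ := by exact mul_lt_mul_of_pos_right hC hSub
  have h3 : (2.506628:ℝ)⁻¹ *
      ((x - x^3/6 + x^5/40 - x^7/336 + x^9/3456 + x^11/35200) +
      2 * x * (1 - x^2/2 + x^4/8 - x^6/48 + x^8/384 + x^10/3200)) < 1/2 := by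
    rw [hxdef]
    norm_num
  linarith

lemma hh_neg_at : hh 0.4525 < 0 := by
  rw [hh_eq]
  set x : ℝ := 0.4525 with hxdef
  have hI := le_I x (by norm_num) (by norm_num)
  have hE := poly_le_f x (by norm_num)
  have hC := lt_C
  have hCpos : (0:ℝ) < (2.5066285:ℝ)⁻¹ := by norm_num
  have hS : (x - x^3/6 + x^5/40 - x^7/336 + x^9/3456 - x^11/35200) +
      2 * x * (1 - x^2/2 + x^4/8 - x^6/48 + x^8/384 - x^10/3200) ≤
      (∫ u in (0:ℝ)..x, f u) + 2 * x * f x := by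
    nlinarith [hI, hE]
  have hSub : (0:ℝ) < (x - x^3/6 + x^5/40 - x^7/336 + x^9/3456 - x^11/35200) +
      2 * x * (1 - x^2/2 + x^4/8 - x^6/48 + x^8/384 - x^10/3200) := by norm_num
  have h2 : (2.5066285:ℝ)⁻¹ *
      ((x - x^3/6 + x^5/40 - x^7/336 + x^9/3456 - x^11/35200) +
      2 * x * (1 - x^2/2 + x^4/8 - x^6/48 + x^8/384 - x^10/3200)) <
      (Real.sqrt (2 * Real.pi))⁻¹ * ((∫ u in (0:ℝ)..x, f u) + 2 * x * f x) := by
    calc (2.5066285:ℝ)⁻¹ *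
        ((x - x^3/6 + x^5/40 - x^7/336 + x^9/3456 - x^11/35200) +
        2 * x * (1 - x^2/2 + x^4/8 - x^6/48 + x^8/384 - x^10/3200))
        < (Real.sqrt (2 * Real.pi))⁻¹ *
        ((x - x^3/6 + x^5/40 - x^7/336 + x^9/3456 - x^11/35200) +
        2 * x * (1 - x^2/2 + x^4/8 - x^6/48 + x^8/384 - x^10/3200)) :=
          mul_lt_mul_of_pos_right hC hSub
      _ ≤ _ := mul_le_mul_of_nonneg_left hS (inv_pos.2 sqrt2pi_pos).le
  have h3 : 1/2 < (2.5066285:ℝ)⁻¹ *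
      ((x - x^3/6 + x^5/40 - x^7/336 + x^9/3456 - x^11/35200) +
      2 * x * (1 - x^2/2 + x^4/8 - x^6/48 + x^8/384 - x^10/3200)) := by
    rw [hxdef]
    norm_num
  linarith

lemma Phi_lb_at : (0.67425:ℝ) ≤ stdNormalCDF 0.4519 := by
  rw [Phi_eq]
  set x : ℝ := 0.4519 with hxdef
  have hI := le_I x (by norm_num) (by norm_num)
  have hIl : (0:ℝ) < x - x^3/6 + x^5/40 - x^7/336 + x^9/3456 - x^11/35200 := by norm_num
  have h2 : (2.5066285:ℝ)⁻¹ * (x - x^3/6 + x^5/40 - x^7/336 + x^9/3456 - x^11/35200) ≤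
      (Real.sqrt (2 * Real.pi))⁻¹ * ∫ u in (0:ℝ)..x, f u := by
    calc (2.5066285:ℝ)⁻¹ * (x - x^3/6 + x^5/40 - x^7/336 + x^9/3456 - x^11/35200)
        ≤ (Real.sqrt (2 * Real.pi))⁻¹ * (x - x^3/6 + x^5/40 - x^7/336 + x^9/3456 - x^11/35200) :=
          (mul_lt_mul_of_pos_right lt_C hIl).le
      _ ≤ _ := mul_le_mul_of_nonneg_left hI (inv_pos.2 sqrt2pi_pos).le
  have h3 : (0.17425:ℝ) ≤ (2.5066285:ℝ)⁻¹ *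
      (x - x^3/6 + x^5/40 - x^7/336 + x^9/3456 - x^11/35200) := by
    rw [hxdef]; norm_num
  linarith

lemma Phi_ub_at : stdNormalCDF 0.4526 ≤ (0.67475:ℝ) := by
  rw [Phi_eq]
  set x : ℝ := 0.4526 with hxdef
  have hI := I_le x (by norm_num) (by norm_num)
  have hIu : (0:ℝ) < x - x^3/6 + x^5/40 - x^7/336 + x^9/3456 + x^11/35200 := by norm_num
  have h2 : (Real.sqrt (2 * Real.pi))⁻¹ * (∫ u in (0:ℝ)..x, f u) ≤
      (2.506628:ℝ)⁻¹ * (x - x^3/6 + x^5/40 - x^7/336 + x^9/3456 + x^11/35200) := by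
    calc (Real.sqrt (2 * Real.pi))⁻¹ * (∫ u in (0:ℝ)..x, f u)
        ≤ (Real.sqrt (2 * Real.pi))⁻¹ * (x - x^3/6 + x^5/40 - x^7/336 + x^9/3456 + x^11/35200) :=
          mul_le_mul_of_nonneg_left hI (inv_pos.2 sqrt2pi_pos).le
      _ ≤ _ := (mul_lt_mul_of_pos_right C_lt hIu).le
  have h3 : (2.506628:ℝ)⁻¹ *
      (x - x^3/6 + x^5/40 - x^7/336 + x^9/3456 + x^11/35200) ≤ 0.17475 := by
    rw [hxdef]; norm_num
  linarith

end Aux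

namespace Aux

lemma g_cont : Continuous g := by
  unfold g
  exact (continuous_const.mul (continuous_const.sub Phi_cont)).mul Real.continuous_sqrt

lemma hasDerivAt_g (x : ℝ) (hx : 0 < x) :
    HasDerivAt g ((Real.sqrt x)⁻¹ * hh x) x := by
  have hs : HasDerivAt Real.sqrt (1 / (2 * Real.sqrt x)) x := Real.hasDerivAt_sqrt hx.ne'
  have h1 : HasDerivAt (fun v => 2 * (1 - stdNormalCDF v))
      (2 * -((Real.sqrt (2 * Real.pi))⁻¹ * f x)) x :=
    ((hasDerivAt_Phi x).const_sub 1).const_mul 2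
  have h2 := h1.mul hs
  have hsp : 0 < Real.sqrt x := Real.sqrt_pos.2 hx
  have hss : Real.sqrt x * Real.sqrt x = x := Real.mul_self_sqrt hx.le
  have hxs : (Real.sqrt x)⁻¹ * x = Real.sqrt x := by
    rw [← hss]
    field_simp
    rw [Real.sqrt_sq hsp.le]
  convert h2 using 1
  · rfl
  · rfl
  · rfl
  unfold hh
  linear_combination (-(2 * (Real.sqrt (2 * Real.pi))⁻¹ * f x)) * hxs

lemma g_mono : StrictMonoOn g (Set.Ioc 0 0.45195) := by
  apply strictMonoOn_of_deriv_pos (convex_Ioc _ _) g_cont.continuousOn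
  intro x hx
  rw [interior_Ioc] at hx
  rw [(hasDerivAt_g x hx.1).deriv]
  apply mul_pos (inv_pos.2 (Real.sqrt_pos.2 hx.1))
  have h := hh_anti (Set.mem_Icc.2 ⟨hx.1.le, by nlinarith [hx.2]⟩)
    (Set.mem_Icc.2 ⟨by norm_num, by norm_num⟩) hx.2
  linarith [hh_pos_at]

lemma g_anti : StrictAntiOn g (Set.Ici (0.4525:ℝ)) := by
  apply strictAntiOn_of_deriv_neg (convex_Ici _) g_cont.continuousOn
  intro x hx
  rw [interior_Ici] at hx
  have hx0 : (0:ℝ) < x := by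
    have : (0.4525:ℝ) < x := hx
    linarith
  rw [(hasDerivAt_g x hx0).deriv]
  apply mul_neg_of_pos_of_neg (inv_pos.2 (Real.sqrt_pos.2 hx0))
  by_cases hx1 : x ≤ 1
  · have h := hh_anti (Set.mem_Icc.2 ⟨by norm_num, by norm_num⟩)
      (Set.mem_Icc.2 ⟨by linarith, hx1⟩) hx
    linarith [hh_neg_at]
  · push_neg at hx1
    have hm := mills x (by linarith)
    have hC : (0:ℝ) < (Real.sqrt (2 * Real.pi))⁻¹ := inv_pos.2 sqrt2pi_pos
    have hfx : f x / x ≤ f x := by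
      rw [div_le_iff₀ hx0]
      nlinarith [f_pos x]
    have h1 : 1 - stdNormalCDF x ≤ (Real.sqrt (2 * Real.pi))⁻¹ * f x :=
      le_trans hm (mul_le_mul_of_nonneg_left hfx hC.le)
    unfold hh
    nlinarith [mul_pos hC (f_pos x)]

lemma exists_max_g : ∃ xm ∈ Set.Icc (0.4519:ℝ) 0.4526, ∀ y ∈ Set.Ioi (0:ℝ), g y ≤ g xm := by
  obtain ⟨xm, hxmK, hmax⟩ := (isCompact_Icc (a := (0.4519:ℝ)) (b := 0.4526)).exists_isMaxOn
    (Set.nonempty_Icc.2 (by norm_num)) g_cont.continuousOn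
  refine ⟨xm, hxmK, ?_⟩
  intro y hy
  have hy0 : (0:ℝ) < y := hy
  rcases le_or_gt y 0.4519 with h1 | h1
  · have ha : g y ≤ g 0.4519 := by
      rcases eq_or_lt_of_le h1 with h | h
      · rw [h]
      · exact (g_mono (Set.mem_Ioc.2 ⟨hy0, by linarith⟩)
          (Set.mem_Ioc.2 ⟨by norm_num, by norm_num⟩) h).le
    exact le_trans ha (hmax (Set.mem_Icc.2 ⟨le_refl _, by norm_num⟩))
  · rcases le_or_gt y 0.4526 with h2 | h2
    · exact hmax (Set.mem_Icc.2 ⟨h1.le, h2⟩)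
    · have ha : g y ≤ g 0.4526 := by
        exact (g_anti (Set.mem_Ici.2 (by norm_num)) (Set.mem_Ici.2 (by linarith)) h2).le
      exact le_trans ha (hmax (Set.mem_Icc.2 ⟨by norm_num, le_refl _⟩))

lemma max_loc (x : ℝ) (hx : 0 < x) (hmax : ∀ y ∈ Set.Ioi (0:ℝ), g y ≤ g x) :
    0.4519 < x ∧ x < 0.4526 := by
  constructor
  · by_contra h
    push_neg at h
    have hlt : g x < g 0.45195 :=
      g_mono (Set.mem_Ioc.2 ⟨hx, by linarith⟩) (Set.mem_Ioc.2 ⟨by norm_num, le_refl _⟩)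
        (by linarith)
    have := hmax 0.45195 (by norm_num)
    linarith
  · by_contra h
    push_neg at h
    have hlt : g x < g 0.4525 :=
      g_anti (Set.mem_Ici.2 (le_refl _)) (Set.mem_Ici.2 (by linarith)) (by linarith)
    have := hmax 0.4525 (by norm_num)
    linarith

noncomputable def F (x : ℝ) : ℝ := 2 * (1 - stdNormalCDF x)

lemma F_mem (x : ℝ) (hx : 0 < x) : F x ∈ Set.Ioo (0:ℝ) 1 := by
  constructor
  · have := Phi_lt_one x
    unfold F
    linarith
  · have := Phi_strictMono hx
    rw [Phi_zero] at this
    unfold F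
    linarith

lemma eff_F (x : ℝ) (hx : 0 < x) : eff (F x) = g x := by
  unfold eff F g
  rw [show 1 - 2 * (1 - stdNormalCDF x) / 2 = stdNormalCDF x by ring,
    Function.leftInverse_invFun Phi_strictMono.injective x]

lemma surj_F (b : ℝ) (hb : b ∈ Set.Ioo (0:ℝ) 1) : ∃ x > 0, F x = b := by
  obtain ⟨x, hx, hPhix⟩ := exists_pos_Phi_eq (1 - b/2)
    (by linarith [hb.2] : 1/2 < 1 - b/2)
    (by linarith [hb.1] : 1 - b/2 < 1)
  exact ⟨x, hx, by unfold F; rw [hPhix]; ring⟩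

end Aux


end AuxProof

open Aux

/-- Theorem `cor:opt`: `eff` attains a maximum on `(0,1)`, and
every maximizer `a*` satisfies `0.6505 < a* < 0.6515`; i.e. the asymptotically
optimal HMC acceptance probability, to three decimal places, is `0.651`. -/
theorem stmt_11 :
    (∃ a ∈ Set.Ioo (0:ℝ) 1, ∀ b ∈ Set.Ioo (0:ℝ) 1, eff b ≤ eff a) ∧
    (∀ a ∈ Set.Ioo (0:ℝ) 1, (∀ b ∈ Set.Ioo (0:ℝ) 1, eff b ≤ eff a) →
      0.6505 < a ∧ a < 0.6515) := by
  constructor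
  · obtain ⟨xm, hxmK, hmax⟩ := exists_max_g
    have hxm0 : (0:ℝ) < xm := by
      have h := hxmK.1
      have : (0:ℝ) < 0.4519 := by norm_num
      linarith
    refine ⟨F xm, F_mem xm hxm0, ?_⟩
    intro b hb
    obtain ⟨xb, hxb0, rfl⟩ := surj_F b hb
    rw [eff_F xb hxb0, eff_F xm hxm0]
    exact hmax xb hxb0
  · intro a ha hmaxa
    obtain ⟨xa, hxa0, hFa⟩ := surj_F a ha
    have hgm : ∀ y ∈ Set.Ioi (0:ℝ), g y ≤ g xa := by
      intro y hy
      have hy0 : (0:ℝ) < y := hy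
      calc g y = eff (F y) := (eff_F y hy0).symm
        _ ≤ eff a := hmaxa (F y) (F_mem y hy0)
        _ = eff (F xa) := by rw [hFa]
        _ = g xa := eff_F xa hxa0
    obtain ⟨h1, h2⟩ := max_loc xa hxa0 hgm
    have hP1 : stdNormalCDF 0.4519 < stdNormalCDF xa := Phi_strictMono h1
    have hP2 : stdNormalCDF xa < stdNormalCDF 0.4526 := Phi_strictMono h2
    have hlb := Phi_lb_at
    have hub := Phi_ub_at
    have haeq : a = 2 * (1 - stdNormalCDF xa) := hFa.symm
    constructor <;> rw [haeq] <;> [nlinarith [hP2, hub]; nlinarith [hP1, hlb]]
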